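/- Let z, c ∈ ℂ. Then there exists N₀ such that for all integers N ≥ N₀ the complex numbers z + N and z + c + N are not poles of the Gamma function, and the sequence N ↦ Γ(z + c + N)/(Γ(z + N) · exp(c · log N)) (with log N the real logarithm) tends to 1 as N → ∞. -/

import Mathlib

open Filter Complex

lemma aux_gamma_shift (s : ℂ) (hs : 0 < s.re) (n : ℕ) :
    Complex.Gamma (s + (n + 1 : ℕ)) =
      Complex.Gamma s * ∏ j ∈ Finset.range (n + 1), (s + j) := by
  induction n with
  | zero =>
      rw [Finset.prod_range_one]
      have h0 : s ≠ 0 := by intro h; rw [h] at hs; simp at hs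
      rw [show ((0 + 1 : ℕ) : ℂ) = 1 by norm_num, Complex.Gamma_add_one s h0]
      push_cast
      ring
  | succ n ih =>
      have hne : s + (n + 1 : ℕ) ≠ 0 := by
        intro h
        have := congrArg Complex.re h
        simp [Complex.add_re] at this
        nlinarith [Nat.cast_nonneg (α := ℝ) n]
      rw [show (((n + 1 : ℕ) + 1 : ℕ) : ℂ) = ((n + 1 : ℕ) : ℂ) + 1 by push_cast; ring,
        ← add_assoc, Complex.Gamma_add_one _ hne, ih]
      conv_rhs => rw [Finset.prod_range_succ]
      push_cast
      ring

theorem stmt18 (z c : ℂ) :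
    ∃ N₀ : ℕ, (∀ N : ℕ, N₀ ≤ N → ∀ m : ℕ, z + (N : ℂ) ≠ -(m : ℂ) ∧ z + c + (N : ℂ) ≠ -(m : ℂ)) ∧
      Tendsto (fun N : ℕ =>
          Complex.Gamma (z + c + (N : ℂ)) /
            (Complex.Gamma (z + (N : ℂ)) * Complex.exp (c * (Real.log N : ℂ))))
        atTop (nhds 1) := by
  obtain ⟨N₀, hN₁, hN₂⟩ : ∃ N₀ : ℕ, (1 : ℝ) - z.re ≤ N₀ ∧ 1 - (z + c).re ≤ N₀ := by
    obtain ⟨N₀, h⟩ := exists_nat_ge (max (1 - z.re) (1 - (z + c).re))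
    exact ⟨N₀, le_trans (le_max_left _ _) h, le_trans (le_max_right _ _) h⟩
  refine ⟨N₀, ?_, ?_⟩
  · intro N hN m
    have hNr : (N₀ : ℝ) ≤ N := Nat.cast_le.mpr hN
    have hm : (0 : ℝ) ≤ m := Nat.cast_nonneg m
    simp only [Complex.add_re] at hN₂
    constructor <;> intro h <;> have := congrArg Complex.re h <;>
      simp only [Complex.add_re, Complex.natCast_re, Complex.neg_re] at this <;> linarith
  · set w : ℂ := z + (N₀ : ℂ) with hw_def
    have hw : 0 < w.re := by
      simp only [hw_def, Complex.add_re, Complex.natCast_re]; linarith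
    have hwc : 0 < (w + c).re := by
      simp only [hw_def, Complex.add_re, Complex.natCast_re] at *; linarith
    have hG : Complex.Gamma w ≠ 0 := Complex.Gamma_ne_zero_of_re_pos hw
    have hGc : Complex.Gamma (w + c) ≠ 0 := Complex.Gamma_ne_zero_of_re_pos hwc
    clear_value w
    rw [← tendsto_add_atTop_iff_nat (N₀ + 1)]
    -- the comparison sequence
    set g : ℕ → ℂ := fun n =>
      (Complex.Gamma (w + c) / Complex.Gamma w) *
        (Complex.GammaSeq w n / Complex.GammaSeq (w + c) n) *
        Complex.exp (c * (((Real.log n : ℝ) : ℂ) -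
          ((Real.log ((n : ℝ) + (N₀ + 1)) : ℝ) : ℂ))) with hg_def
    have hlog : Tendsto (fun n : ℕ => Real.log n - Real.log ((n : ℝ) + (N₀ + 1)))
        atTop (nhds 0) := by
      have hb : Tendsto (fun n : ℕ => (n : ℝ) + (N₀ + 1)) atTop atTop :=
        tendsto_atTop_add_const_right atTop _ tendsto_natCast_atTop_atTop
      have hq : Tendsto (fun n : ℕ => (n : ℝ) / ((n : ℝ) + (N₀ + 1))) atTop (nhds 1) := by
        have h0 : Tendsto (fun n : ℕ => ((N₀ : ℝ) + 1) / ((n : ℝ) + (N₀ + 1))) atTop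
            (nhds 0) := Tendsto.div_atTop tendsto_const_nhds hb
        have := (tendsto_const_nhds (x := (1 : ℝ)) (f := atTop)).sub h0
        rw [sub_zero] at this
        refine this.congr fun n => ?_
        have hne : (n : ℝ) + (N₀ + 1) ≠ 0 := by positivity
        field_simp
        ring
      have hcont := (Real.continuousAt_log one_ne_zero).tendsto.comp hq
      rw [Real.log_one] at hcont
      refine hcont.congr' ?_
      filter_upwards [eventually_ge_atTop 1] with n hn
      have hn0 : (0 : ℝ) < n := by exact_mod_cast hn
      have hne : (n : ℝ) + (N₀ + 1) ≠ 0 := by positivity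
      simp only [Function.comp]
      rw [Real.log_div (ne_of_gt hn0) hne]
    have hexp : Tendsto (fun n : ℕ => Complex.exp (c * (((Real.log n : ℝ) : ℂ) -
        ((Real.log ((n : ℝ) + (N₀ + 1)) : ℝ) : ℂ)))) atTop (nhds 1) := by
      have h1 : Tendsto (fun n : ℕ => (((Real.log n - Real.log ((n : ℝ) + (N₀ + 1)) : ℝ)) : ℂ))
          atTop (nhds (0 : ℂ)) := by
        have h0 := (Complex.continuous_ofReal.tendsto 0).comp hlog
        rw [Complex.ofReal_zero] at h0
        exact h0
      have h2 : Tendsto (fun n : ℕ => c * (((Real.log n : ℝ) : ℂ) -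
          ((Real.log ((n : ℝ) + (N₀ + 1)) : ℝ) : ℂ))) atTop (nhds 0) := by
        have := h1.const_mul c
        rw [mul_zero] at this
        refine this.congr fun n => ?_
        push_cast
        ring
      have h3 := (Complex.continuous_exp.tendsto 0).comp h2
      rw [Complex.exp_zero] at h3
      exact h3
    have hgl : Tendsto g atTop (nhds 1) := by
      have hS : Tendsto (fun n => Complex.GammaSeq w n / Complex.GammaSeq (w + c) n) atTop
          (nhds (Complex.Gamma w / Complex.Gamma (w + c))) :=
        (Complex.GammaSeq_tendsto_Gamma w).div (Complex.GammaSeq_tendsto_Gamma (w + c)) hGc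
      have := ((tendsto_const_nhds (x := Complex.Gamma (w + c) / Complex.Gamma w)
        (f := atTop)).mul hS).mul hexp
      rw [hg_def]
      convert this using 2
      field_simp
    refine hgl.congr' ?_
    filter_upwards [eventually_ge_atTop 1] with n hn
    have hn0 : (n : ℂ) ≠ 0 := by
      exact_mod_cast Nat.one_le_iff_ne_zero.mp hn
    have hcast : ((n + (N₀ + 1) : ℕ) : ℂ) = (N₀ : ℂ) + ((n + 1 : ℕ) : ℂ) := by
      push_cast; ring
    have hargc : z + c + ((n + (N₀ + 1) : ℕ) : ℂ) = (w + c) + ((n + 1 : ℕ) : ℂ) := by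
      rw [hcast, hw_def]; ring
    have harg : z + ((n + (N₀ + 1) : ℕ) : ℂ) = w + ((n + 1 : ℕ) : ℂ) := by
      rw [hcast, hw_def]; ring
    have hP1 : (∏ j ∈ Finset.range (n + 1), (w + c + (j : ℂ))) ≠ 0 := by
      refine Finset.prod_ne_zero_iff.mpr fun j _ => ?_
      intro h
      have h' := congrArg Complex.re h
      simp only [Complex.add_re, Complex.natCast_re, Complex.zero_re] at h'
      have hre : 0 < w.re + c.re := by simpa [Complex.add_re] using hwc
      nlinarith [Nat.cast_nonneg (α := ℝ) j]
    have hP2 : (∏ j ∈ Finset.range (n + 1), (w + (j : ℂ))) ≠ 0 := by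
      refine Finset.prod_ne_zero_iff.mpr fun j _ => ?_
      intro h
      have h' := congrArg Complex.re h
      simp only [Complex.add_re, Complex.natCast_re, Complex.zero_re] at h'
      nlinarith [Nat.cast_nonneg (α := ℝ) j, hw]
    have hpow : (n : ℂ) ^ (w + c) = (n : ℂ) ^ w * (n : ℂ) ^ c :=
      Complex.cpow_add _ _ hn0
    have hc : (n : ℂ) ^ c = Complex.exp (c * ((Real.log n : ℝ) : ℂ)) := by
      rw [Complex.cpow_def_of_ne_zero hn0, Complex.natCast_log, mul_comm]
    have hpw : (n : ℂ) ^ w ≠ 0 := by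
      intro h
      rcases (Complex.cpow_eq_zero_iff _ _).mp h with ⟨h1, -⟩
      exact hn0 h1
    have hfac : ((n.factorial : ℕ) : ℂ) ≠ 0 :=
      Nat.cast_ne_zero.mpr n.factorial_ne_zero
    have hlogc : ((n + (N₀ + 1) : ℕ) : ℝ) = (n : ℝ) + (N₀ + 1) := by push_cast; ring
    simp only [hargc, harg, aux_gamma_shift (w + c) hwc n, aux_gamma_shift w hw n,
      hg_def, Complex.GammaSeq, hlogc, hpow, hc, mul_sub, Complex.exp_sub]
    have hE1 : Complex.exp (c * ((Real.log n : ℝ) : ℂ)) ≠ 0 := Complex.exp_ne_zero _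
    have hE2 : Complex.exp (c * ((Real.log ((n : ℝ) + (N₀ + 1)) : ℝ) : ℂ)) ≠ 0 :=
      Complex.exp_ne_zero _
    field_simp
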